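/- arXiv:2202.04794 — 5 statements merged into one kernel-verified Lean document; each statement's English description precedes it below -/
import Mathlib

section
/- Let K be a field and let α₁,...,α₆ ∈ K² be pairwise linearly independent vectors (written as columns of 2×2 determinants |αᵢαⱼ|). Then there exist nonzero scalars c₁,...,c₆ ∈ K satisfying c₄α₄ = c₂α₂ − c₃α₃, c₅α₅ = c₃α₃ − c₁α₁, and c₆α₆ = c₁α₁ − c₂α₂ if and only if |α₁α₅||α₂α₆||α₃α₄| = |α₁α₆||α₂α₄||α₃α₅|. -/
/-- The 2×2 determinant with columns `a`, `b` in `K²`. -/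
def det2 {K : Type*} [Field K] (a b : K × K) : K := a.1 * b.2 - a.2 * b.1

/-- Characterization of the Crapo configuration (Ceva-type theorem):
six pairwise linearly independent vectors α₁,...,α₆ (here `α 0,...,α 5`) admit
nonzero scalars with c₄α₄ = c₂α₂ − c₃α₃, c₅α₅ = c₃α₃ − c₁α₁, c₆α₆ = c₁α₁ − c₂α₂
iff |α₁α₅||α₂α₆||α₃α₄| = |α₁α₆||α₂α₄||α₃α₅|. -/
theorem stmt0 {K : Type*} [Field K] (α : Fin 6 → K × K)
    (hindep : ∀ i j : Fin 6, i ≠ j → det2 (α i) (α j) ≠ 0) :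
    (∃ c : Fin 6 → K, (∀ i, c i ≠ 0) ∧
      c 3 • α 3 = c 1 • α 1 - c 2 • α 2 ∧
      c 4 • α 4 = c 2 • α 2 - c 0 • α 0 ∧
      c 5 • α 5 = c 0 • α 0 - c 1 • α 1) ↔
    det2 (α 0) (α 4) * det2 (α 1) (α 5) * det2 (α 2) (α 3)
      = det2 (α 0) (α 5) * det2 (α 1) (α 3) * det2 (α 2) (α 4) := by
  constructor
  · rintro ⟨c, hc, h1, h2, h3⟩
    have h11 : c 3 * (α 3).1 = c 1 * (α 1).1 - c 2 * (α 2).1 := by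
      have := congrArg Prod.fst h1; simpa [smul_eq_mul] using this
    have h12 : c 3 * (α 3).2 = c 1 * (α 1).2 - c 2 * (α 2).2 := by
      have := congrArg Prod.snd h1; simpa [smul_eq_mul] using this
    have h21 : c 4 * (α 4).1 = c 2 * (α 2).1 - c 0 * (α 0).1 := by
      have := congrArg Prod.fst h2; simpa [smul_eq_mul] using this
    have h22 : c 4 * (α 4).2 = c 2 * (α 2).2 - c 0 * (α 0).2 := by
      have := congrArg Prod.snd h2; simpa [smul_eq_mul] using this
    have h31 : c 5 * (α 5).1 = c 0 * (α 0).1 - c 1 * (α 1).1 := by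
      have := congrArg Prod.fst h3; simpa [smul_eq_mul] using this
    have h32 : c 5 * (α 5).2 = c 0 * (α 0).2 - c 1 * (α 1).2 := by
      have := congrArg Prod.snd h3; simpa [smul_eq_mul] using this
    have A1 : c 3 * det2 (α 1) (α 3) = -(c 2 * det2 (α 1) (α 2)) := by
      simp only [det2]; linear_combination (α 1).1 * h12 - (α 1).2 * h11
    have A2 : c 3 * det2 (α 2) (α 3) = -(c 1 * det2 (α 1) (α 2)) := by
      simp only [det2]; linear_combination (α 2).1 * h12 - (α 2).2 * h11
    have B1 : c 4 * det2 (α 2) (α 4) = c 0 * det2 (α 0) (α 2) := by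
      simp only [det2]; linear_combination (α 2).1 * h22 - (α 2).2 * h21
    have B2 : c 4 * det2 (α 0) (α 4) = c 2 * det2 (α 0) (α 2) := by
      simp only [det2]; linear_combination (α 0).1 * h22 - (α 0).2 * h21
    have C1 : c 5 * det2 (α 0) (α 5) = -(c 1 * det2 (α 0) (α 1)) := by
      simp only [det2]; linear_combination (α 0).1 * h32 - (α 0).2 * h31
    have C2 : c 5 * det2 (α 1) (α 5) = -(c 0 * det2 (α 0) (α 1)) := by
      simp only [det2]; linear_combination (α 1).1 * h32 - (α 1).2 * h31
    have hne : c 3 * c 4 * c 5 ≠ 0 :=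
      mul_ne_zero (mul_ne_zero (hc 3) (hc 4)) (hc 5)
    apply mul_left_cancel₀ hne
    linear_combination
      (c 4 * det2 (α 0) (α 4) * (c 5 * det2 (α 1) (α 5))) * A2
      + (-(c 1 * det2 (α 1) (α 2)) * (c 5 * det2 (α 1) (α 5))) * B2
      + (-(c 1 * det2 (α 1) (α 2)) * (c 2 * det2 (α 0) (α 2))) * C2
      - (c 4 * det2 (α 2) (α 4) * (c 5 * det2 (α 0) (α 5))) * A1
      - (-(c 2 * det2 (α 1) (α 2)) * (c 5 * det2 (α 0) (α 5))) * B1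
      - (-(c 2 * det2 (α 1) (α 2)) * (c 0 * det2 (α 0) (α 2))) * C1
  · intro hd
    have d01 : det2 (α 0) (α 1) ≠ 0 := hindep 0 1 (by decide)
    have d02 : det2 (α 0) (α 2) ≠ 0 := hindep 0 2 (by decide)
    have d04 : det2 (α 0) (α 4) ≠ 0 := hindep 0 4 (by decide)
    have d05 : det2 (α 0) (α 5) ≠ 0 := hindep 0 5 (by decide)
    have d12 : det2 (α 1) (α 2) ≠ 0 := hindep 1 2 (by decide)
    have d15 : det2 (α 1) (α 5) ≠ 0 := hindep 1 5 (by decide)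
    have d23 : det2 (α 2) (α 3) ≠ 0 := hindep 2 3 (by decide)
    have d24 : det2 (α 2) (α 4) ≠ 0 := hindep 2 4 (by decide)
    refine ⟨![-(det2 (α 1) (α 5) * det2 (α 2) (α 4) * det2 (α 2) (α 3)),
      -(det2 (α 0) (α 5) * det2 (α 2) (α 4) * det2 (α 2) (α 3)),
      -(det2 (α 1) (α 5) * det2 (α 0) (α 4) * det2 (α 2) (α 3)),
      det2 (α 0) (α 5) * det2 (α 2) (α 4) * det2 (α 1) (α 2),
      -(det2 (α 1) (α 5) * det2 (α 0) (α 2) * det2 (α 2) (α 3)),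
      det2 (α 0) (α 1) * det2 (α 2) (α 4) * det2 (α 2) (α 3)], ?_, ?_, ?_, ?_⟩
    · intro i
      fin_cases i <;>
        simp only [Matrix.cons_val_zero, Matrix.cons_val_one, Matrix.head_cons,
          Matrix.cons_val_two, Matrix.tail_cons, Matrix.cons_val_three,
          Matrix.cons_val_four, Matrix.cons_val']
      · exact neg_ne_zero.mpr (mul_ne_zero (mul_ne_zero d15 d24) d23)
      · exact neg_ne_zero.mpr (mul_ne_zero (mul_ne_zero d05 d24) d23)
      · exact neg_ne_zero.mpr (mul_ne_zero (mul_ne_zero d15 d04) d23)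
      · exact mul_ne_zero (mul_ne_zero d05 d24) d12
      · exact neg_ne_zero.mpr (mul_ne_zero (mul_ne_zero d15 d02) d23)
      · exact mul_ne_zero (mul_ne_zero d01 d24) d23
    · show (det2 (α 0) (α 5) * det2 (α 2) (α 4) * det2 (α 1) (α 2)) • α 3
        = (-(det2 (α 0) (α 5) * det2 (α 2) (α 4) * det2 (α 2) (α 3))) • α 1
          - (-(det2 (α 1) (α 5) * det2 (α 0) (α 4) * det2 (α 2) (α 3))) • α 2
      simp only [det2] at hd
      apply Prod.ext
      · simp only [det2, Prod.smul_fst, Prod.fst_sub, smul_eq_mul]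
        linear_combination (-(α 2).1) * hd
      · simp only [det2, Prod.smul_snd, Prod.snd_sub, smul_eq_mul]
        linear_combination (-(α 2).2) * hd
    · show (-(det2 (α 1) (α 5) * det2 (α 0) (α 2) * det2 (α 2) (α 3))) • α 4
        = (-(det2 (α 1) (α 5) * det2 (α 0) (α 4) * det2 (α 2) (α 3))) • α 2
          - (-(det2 (α 1) (α 5) * det2 (α 2) (α 4) * det2 (α 2) (α 3))) • α 0
      apply Prod.ext
      · simp only [det2, Prod.smul_fst, Prod.fst_sub, smul_eq_mul]; ring
      · simp only [det2, Prod.smul_snd, Prod.snd_sub, smul_eq_mul]; ring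
    · show (det2 (α 0) (α 1) * det2 (α 2) (α 4) * det2 (α 2) (α 3)) • α 5
        = (-(det2 (α 1) (α 5) * det2 (α 2) (α 4) * det2 (α 2) (α 3))) • α 0
          - (-(det2 (α 0) (α 5) * det2 (α 2) (α 4) * det2 (α 2) (α 3))) • α 1
      apply Prod.ext
      · simp only [det2, Prod.smul_fst, Prod.fst_sub, smul_eq_mul]; ring
      · simp only [det2, Prod.smul_snd, Prod.snd_sub, smul_eq_mul]; ring
end

section
/- Let K be a field and let λ₄, λ₅, λ₆ ∈ K∖{0,1} be pairwise distinct. Set α₁=(1,0), α₂=(0,1), α₃=(1,1), αⱼ=(λⱼ,1) for j=4,5,6. Then the following are equivalent: (a) (1−λ₅)λ₄ = (1−λ₄)λ₆; (b) the three equations [α₄,α₅;α₆,α₁]=λ₄, [α₄,α₅;α₆,α₂]=λ₅, [α₄,α₅;α₆,α₃]=λ₆ all hold, where [v₁,v₂;v₃,v₄]=|v₁v₃||v₂v₄|/(|v₂v₃||v₁v₄|). -/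
/-- The cross ratio `[v₁,v₂;v₃,v₄] = |v₁v₃||v₂v₄| / (|v₂v₃||v₁v₄|)`. -/
def crossRatio {K : Type*} [Field K] (v1 v2 v3 v4 : K × K) : K :=
  det2 v1 v3 * det2 v2 v4 / (det2 v2 v3 * det2 v1 v4)

/-- With α₁=(1,0), α₂=(0,1), α₃=(1,1), αⱼ=(λⱼ,1) for j=4,5,6 and λ₄,λ₅,λ₆ ∈ K∖{0,1}
pairwise distinct, the condition (1−λ₅)λ₄ = (1−λ₄)λ₆ is equivalent to the three
cross-ratio equations [α₄,α₅;α₆,α₁]=λ₄, [α₄,α₅;α₆,α₂]=λ₅, [α₄,α₅;α₆,α₃]=λ₆. -/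
theorem stmt3 {K : Type*} [Field K] (l4 l5 l6 : K)
    (h40 : l4 ≠ 0) (h41 : l4 ≠ 1) (h50 : l5 ≠ 0) (h51 : l5 ≠ 1)
    (h60 : l6 ≠ 0) (h61 : l6 ≠ 1)
    (h45 : l4 ≠ l5) (h46 : l4 ≠ l6) (h56 : l5 ≠ l6) :
    (1 - l5) * l4 = (1 - l4) * l6 ↔
      (crossRatio (l4, 1) (l5, 1) (l6, 1) ((1 : K), (0 : K)) = l4 ∧
       crossRatio (l4, 1) (l5, 1) (l6, 1) ((0 : K), (1 : K)) = l5 ∧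
       crossRatio (l4, 1) (l5, 1) (l6, 1) ((1 : K), (1 : K)) = l6) := by
  have h46' : l4 - l6 ≠ 0 := sub_ne_zero.mpr h46
  have h56' : l5 - l6 ≠ 0 := sub_ne_zero.mpr h56
  have h41' : l4 - 1 ≠ 0 := sub_ne_zero.mpr h41
  unfold crossRatio det2
  simp only []
  constructor
  · intro h
    refine ⟨?_, ?_, ?_⟩
    · rw [div_eq_iff (by intro hc; rcases mul_eq_zero.mp hc with hc | hc <;> simp_all)]
      linear_combination -h
    · rw [div_eq_iff (by intro hc; rcases mul_eq_zero.mp hc with hc | hc <;> simp_all)]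
      linear_combination l5 * h
    · rw [div_eq_iff (by intro hc; rcases mul_eq_zero.mp hc with hc | hc <;> simp_all [sub_eq_zero])]
      linear_combination (l6 - 1) * h
  · rintro ⟨h1, -, -⟩
    rw [div_eq_iff (by intro hc; rcases mul_eq_zero.mp hc with hc | hc <;> simp_all)] at h1
    linear_combination -h1
end

section
/- Let K be a field of characteristic ≠ 2 and let α₁,...,α₆ ∈ K³ be vectors, any three of which are linearly independent. For each pair {p,q}, let α_p × α_q denote the cross product. Suppose det(α₁×α₂, α₃×α₄, α₅×α₆) = 0 and det(α₁×α₆, α₂×α₃, α₄×α₅) = 0. Then det(α₁×α₄, α₂×α₅, α₃×α₆) = 0. -/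
/-- The 3×3 determinant with columns `a`, `b`, `c` in `K³`. -/
def det3 {K : Type*} [Field K] (a b c : Fin 3 → K) : K :=
  a 0 * (b 1 * c 2 - b 2 * c 1) - a 1 * (b 0 * c 2 - b 2 * c 0)
    + a 2 * (b 0 * c 1 - b 1 * c 0)

/-- The cross product on `K³`. -/
def cross3 {K : Type*} [Field K] (a b : Fin 3 → K) : Fin 3 → K :=
  ![a 1 * b 2 - a 2 * b 1, a 2 * b 0 - a 0 * b 2, a 0 * b 1 - a 1 * b 0]

/-- Pappus' theorem in cross-product form: for α₁,...,α₆ ∈ K³ (char K ≠ 2), any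
three of which are linearly independent, if det(α₁×α₂, α₃×α₄, α₅×α₆) = 0 and
det(α₁×α₆, α₂×α₃, α₄×α₅) = 0 then det(α₁×α₄, α₂×α₅, α₃×α₆) = 0.
(Indices shifted: αᵢ is `α (i-1)`.) -/
theorem stmt10 {K : Type*} [Field K] (h2 : (2 : K) ≠ 0) (α : Fin 6 → Fin 3 → K)
    (hindep : ∀ i j k : Fin 6, i ≠ j → i ≠ k → j ≠ k →
      det3 (α i) (α j) (α k) ≠ 0)
    (h1 : det3 (cross3 (α 0) (α 1)) (cross3 (α 2) (α 3)) (cross3 (α 4) (α 5)) = 0)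
    (h6 : det3 (cross3 (α 0) (α 5)) (cross3 (α 1) (α 2)) (cross3 (α 3) (α 4)) = 0) :
    det3 (cross3 (α 0) (α 3)) (cross3 (α 1) (α 4)) (cross3 (α 2) (α 5)) = 0 := by
  simp only [det3, cross3, Matrix.cons_val_zero, Matrix.cons_val_one, Matrix.head_cons,
    Matrix.cons_val_two, Matrix.tail_cons] at h1 h6 ⊢
  linear_combination -h1 - h6
end

section
/- Let K be a field of characteristic 0 and w,x,y,z ∈ K with w,x,y,z ∉ {0,1}, w≠x, w≠y, x≠z, y≠z, wz≠xy, and w−x−y+z−wz+xy ≠ 0. Then the system x−y = 0, xy + z = 0, xy − x + z − y = 0 has no solution. (Equivalently: there is no type 2³ arrangement of 6 planes over a characteristic 0 field.) -/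
/-- No type 2³ arrangement of 6 planes exists over a field of characteristic 0:
the three collinearity conditions x−y = 0, xy+z = 0, xy−x+z−y = 0 are
incompatible with the genericity constraints. -/
theorem stmt12 {K : Type*} [Field K] [CharZero K] (w x y z : K)
    (hw0 : w ≠ 0) (hw1 : w ≠ 1) (hx0 : x ≠ 0) (hx1 : x ≠ 1)
    (hy0 : y ≠ 0) (hy1 : y ≠ 1) (hz0 : z ≠ 0) (hz1 : z ≠ 1)
    (hwx : w ≠ x) (hwy : w ≠ y) (hxz : x ≠ z) (hyz : y ≠ z)
    (hdet : w * z ≠ x * y) (hlast : w - x - y + z - w * z + x * y ≠ 0) :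
    ¬(x - y = 0 ∧ x * y + z = 0 ∧ x * y - x + z - y = 0) := by
  rintro ⟨h1, h2, h3⟩
  apply hx0
  have h4 : x + y = 0 := by linear_combination h2 - h3
  have : (2 : K) * x = 0 := by linear_combination h1 + h4
  have h2ne : (2 : K) ≠ 0 := two_ne_zero
  exact (mul_eq_zero.mp this).resolve_left h2ne
end

section
/- Let K be a field of characteristic 2 containing an element ω with ω² + ω + 1 = 0 (e.g. K = 𝔽₄). Set α₁=(1,0,0), α₂=(0,1,0), α₃=(0,0,1), α₄=(1,1,1), α₅=(ω,ω²,1), α₆=(ω²,ω,1) in K³. Then any three of α₁,...,α₆ are linearly independent, and for every partition of {1,...,6} into three pairs {p₁,p₂},{p₃,p₄},{p₅,p₆}, we have det(α_{p₁}×α_{p₂}, α_{p₃}×α_{p₄}, α_{p₅}×α_{p₆}) = 0 — i.e. all 15 collinearity conditions hold. -/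
/-- A concrete model of 𝔽₄: pairs `(a, b)` representing `a + b·ω`. -/
abbrev F4 := Fin 2 × Fin 2

def addF (x y : F4) : F4 := (x.1 + y.1, x.2 + y.2)
def mulF (x y : F4) : F4 :=
  (x.1 * y.1 + x.2 * y.2, x.1 * y.2 + x.2 * y.1 + x.2 * y.2)
def subF (x y : F4) : F4 := addF x y

def det3F (a b c : Fin 3 → F4) : F4 :=
  addF (subF (mulF (a 0) (subF (mulF (b 1) (c 2)) (mulF (b 2) (c 1))))
      (mulF (a 1) (subF (mulF (b 0) (c 2)) (mulF (b 2) (c 0)))))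
    (mulF (a 2) (subF (mulF (b 0) (c 1)) (mulF (b 1) (c 0))))

def cross3F (a b : Fin 3 → F4) : Fin 3 → F4 :=
  ![subF (mulF (a 1) (b 2)) (mulF (a 2) (b 1)),
    subF (mulF (a 2) (b 0)) (mulF (a 0) (b 2)),
    subF (mulF (a 0) (b 1)) (mulF (a 1) (b 0))]

def betaF : Fin 6 → Fin 3 → F4 :=
  ![![(1,0), (0,0), (0,0)], ![(0,0), (1,0), (0,0)], ![(0,0), (0,0), (1,0)],
    ![(1,0), (1,0), (1,0)], ![(0,1), (1,1), (1,0)], ![(1,1), (0,1), (1,0)]]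

def phi {K : Type*} [Field K] (ω : K) (x : F4) : K :=
  (if x.1 = 1 then 1 else 0) + (if x.2 = 1 then 1 else 0) * ω

section K
variable {K : Type*} [Field K]

lemma phiAdd (h2 : (2 : K) = 0) (ω : K) (x y : F4) :
    phi ω (addF x y) = phi ω x + phi ω y := by
  obtain ⟨a, b⟩ := x; obtain ⟨c, d⟩ := y
  fin_cases a <;> fin_cases b <;> fin_cases c <;> fin_cases d <;>
    simp [phi, addF] <;>
    first
      | ring1
      | linear_combination h2
      | linear_combination ω * h2
      | linear_combination h2 + ω * h2
      | linear_combination -h2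
      | linear_combination -ω * h2
      | linear_combination -h2 - ω * h2

lemma phiMul (h2 : (2 : K) = 0) (ω : K) (hω : ω ^ 2 + ω + 1 = 0) (x y : F4) :
    phi ω (mulF x y) = phi ω x * phi ω y := by
  obtain ⟨a, b⟩ := x; obtain ⟨c, d⟩ := y
  fin_cases a <;> fin_cases b <;> fin_cases c <;> fin_cases d <;>
    simp [phi, mulF] <;>
    first
      | ring1
      | linear_combination hω
      | linear_combination -hω
      | linear_combination hω + h2
      | linear_combination hω - h2
      | linear_combination -hω + h2
      | linear_combination -hω - h2
      | linear_combination hω + ω * h2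
      | linear_combination hω - ω * h2
      | linear_combination -hω + ω * h2
      | linear_combination -hω - ω * h2
      | linear_combination hω + h2 + ω * h2
      | linear_combination hω - h2 - ω * h2
      | linear_combination -hω + h2 + ω * h2
      | linear_combination -hω - h2 - ω * h2
      | linear_combination h2
      | linear_combination ω * h2
      | linear_combination h2 + ω * h2
      | linear_combination -h2
      | linear_combination -ω * h2
      | linear_combination -h2 - ω * h2

lemma phiSub (h2 : (2 : K) = 0) (ω : K) (x y : F4) :
    phi ω (subF x y) = phi ω x - phi ω y := by
  rw [subF, phiAdd h2 ω]
  linear_combination phi ω y * h2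

lemma phiCross (h2 : (2 : K) = 0) (ω : K) (hω : ω ^ 2 + ω + 1 = 0)
    (a b : Fin 3 → F4) :
    cross3 (fun m => phi ω (a m)) (fun m => phi ω (b m))
      = fun m => phi ω (cross3F a b m) := by
  funext m
  fin_cases m <;>
    simp [cross3, cross3F, phiMul h2 ω hω, phiSub h2 ω, phiAdd h2 ω]

lemma phiDet (h2 : (2 : K) = 0) (ω : K) (hω : ω ^ 2 + ω + 1 = 0)
    (a b c : Fin 3 → F4) :
    det3 (fun m => phi ω (a m)) (fun m => phi ω (b m)) (fun m => phi ω (c m))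
      = phi ω (det3F a b c) := by
  simp only [det3, det3F, phiMul h2 ω hω, phiSub h2 ω, phiAdd h2 ω]
  try ring1

lemma phiZero (h2 : (2 : K) = 0) (ω : K) (hω : ω ^ 2 + ω + 1 = 0) (z : F4)
    (h : phi ω z = 0) : z = ((0 : Fin 2), (0 : Fin 2)) := by
  obtain ⟨a, b⟩ := z
  fin_cases a <;> fin_cases b
  · rfl
  · have hw : ω = 0 := by simpa [phi] using h
    exact absurd (show (1 : K) = 0 by linear_combination hω - (ω + 1) * hw) one_ne_zero
  · exact absurd (show (1 : K) = 0 by simpa [phi] using h) one_ne_zero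
  · have hw : 1 + ω = 0 := by simpa [phi] using h
    exact absurd (show (1 : K) = 0 by linear_combination hω - ω * hw) one_ne_zero

end K

lemma decide1 : ∀ i j k : Fin 6, i ≠ j → i ≠ k → j ≠ k →
    det3F (betaF i) (betaF j) (betaF k) ≠ ((0 : Fin 2), (0 : Fin 2)) := by decide

set_option maxHeartbeats 1000000 in
set_option synthInstance.maxSize 1024 in
lemma decide2 : ∀ a b c d e f : Fin 6,
    a ≠ b → a ≠ c → a ≠ d → a ≠ e → a ≠ f → b ≠ c → b ≠ d → b ≠ e → b ≠ f →
    c ≠ d → c ≠ e → c ≠ f → d ≠ e → d ≠ f → e ≠ f →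
    det3F (cross3F (betaF a) (betaF b)) (cross3F (betaF c) (betaF d))
      (cross3F (betaF e) (betaF f)) = ((0 : Fin 2), (0 : Fin 2)) := by decide

/-- The type 6¹ arrangement over a characteristic-2 field containing a primitive
cube root of unity ω: the six normals are in general position (any three linearly
independent) and all 15 collinearity conditions hold, i.e. for every partition of
{1,...,6} into three pairs (given by a permutation) the corresponding determinant
vanishes. -/
theorem stmt15 {K : Type*} [Field K] (h2 : (2 : K) = 0) (ω : K)
    (hω : ω ^ 2 + ω + 1 = 0)
    (α : Fin 6 → Fin 3 → K)
    (hα : α = ![![1, 0, 0], ![0, 1, 0], ![0, 0, 1], ![1, 1, 1],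
      ![ω, ω ^ 2, 1], ![ω ^ 2, ω, 1]]) :
    (∀ i j k : Fin 6, i ≠ j → i ≠ k → j ≠ k → det3 (α i) (α j) (α k) ≠ 0) ∧
    (∀ p : Equiv.Perm (Fin 6),
      det3 (cross3 (α (p 0)) (α (p 1))) (cross3 (α (p 2)) (α (p 3)))
        (cross3 (α (p 4)) (α (p 5))) = 0) := by
  subst hα
  have hαφ : ∀ i : Fin 6,
      (![![1, 0, 0], ![0, 1, 0], ![0, 0, 1], ![1, 1, 1],
        ![ω, ω ^ 2, 1], ![ω ^ 2, ω, 1]] : Fin 6 → Fin 3 → K) i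
        = fun m => phi ω (betaF i m) := by
    intro i
    funext m
    fin_cases i <;> fin_cases m <;>
      first
        | (show (0 : K) = phi ω ((0 : Fin 2), (0 : Fin 2)); simp [phi])
        | (show (1 : K) = phi ω ((1 : Fin 2), (0 : Fin 2)); simp [phi])
        | (show (ω : K) = phi ω ((0 : Fin 2), (1 : Fin 2)); simp [phi])
        | (show (ω ^ 2 : K) = phi ω ((1 : Fin 2), (1 : Fin 2));
            simp [phi]; linear_combination hω - h2 - ω * h2)
  have hφ0 : phi ω ((0 : Fin 2), (0 : Fin 2)) = 0 := by simp [phi]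
  constructor
  · intro i j k hij hik hjk
    rw [hαφ i, hαφ j, hαφ k, phiDet h2 ω hω]
    intro h
    exact decide1 i j k hij hik hjk (phiZero h2 ω hω _ h)
  · intro p
    have hne : ∀ a b : Fin 6, a ≠ b → p a ≠ p b := fun a b hab => p.injective.ne hab
    rw [hαφ (p 0), hαφ (p 1), hαφ (p 2), hαφ (p 3), hαφ (p 4), hαφ (p 5),
      phiCross h2 ω hω, phiCross h2 ω hω, phiCross h2 ω hω, phiDet h2 ω hω,
      decide2 (p 0) (p 1) (p 2) (p 3) (p 4) (p 5)
        (hne 0 1 (by decide)) (hne 0 2 (by decide)) (hne 0 3 (by decide))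
        (hne 0 4 (by decide)) (hne 0 5 (by decide)) (hne 1 2 (by decide))
        (hne 1 3 (by decide)) (hne 1 4 (by decide)) (hne 1 5 (by decide))
        (hne 2 3 (by decide)) (hne 2 4 (by decide)) (hne 2 5 (by decide))
        (hne 3 4 (by decide)) (hne 3 5 (by decide)) (hne 4 5 (by decide)),
      hφ0]
end
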